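/- Let {{-,-}} be a double bracket on an associative algebra A with associated single bracket {a,b} = m({{a,b}}). Then {[a,b],c} = 0 for all a,b,c in A; that is, the single bracket vanishes whenever its first argument is a commutator. -/
import Mathlib


/-!
STATEMENT 1: For a double bracket on A, the single bracket vanishes whenever its
first argument is a commutator: {[a,b],c} = 0.
-/

namespace Stmt1

open TensorProduct

variable {R A : Type*} [CommRing R] [Ring A] [Algebra R A]

/-- The cyclic permutation τ_(123) on A⊗A⊗A : x⊗y⊗z ↦ z⊗x⊗y. -/
noncomputable def cyc3 (R A : Type*) [CommRing R] [Ring A] [Algebra R A] :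
    (A ⊗[R] A) ⊗[R] A →ₗ[R] (A ⊗[R] A) ⊗[R] A :=
  ((TensorProduct.assoc R A A A).symm.toLinearMap).comp
    (TensorProduct.comm R (A ⊗[R] A) A).toLinearMap

/-- The triple bracket associated to a binary operation `D`:
{{a,b,c}} = {{a,{{b,c}}}}_L + τ_(123){{b,{{c,a}}}}_L + τ_(132){{c,{{a,b}}}}_L,
where {{a,u⊗v}}_L = {{a,u}}⊗v. -/
noncomputable def tripleBr (D : A →ₗ[R] A →ₗ[R] A ⊗[R] A) (a b c : A) :
    (A ⊗[R] A) ⊗[R] A :=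
  LinearMap.rTensor A (D a) (D b c)
    + cyc3 R A (LinearMap.rTensor A (D b) (D c a))
    + cyc3 R A (cyc3 R A (LinearMap.rTensor A (D c) (D a b)))

/-- The single bracket {a,b} = m({{a,b}}) associated to `D`. -/
noncomputable def sb (D : A →ₗ[R] A →ₗ[R] A ⊗[R] A) (a b : A) : A :=
  LinearMap.mul' R A (D a b)

/-- The single bracket vanishes on commutators in its first argument. -/
theorem sb_commutator_left (D : A →ₗ[R] A →ₗ[R] A ⊗[R] A)
    -- derivation in the second argument for the outer bimodule structure
    (hder : ∀ a b c : A, D a (b * c) = D a b * (1 ⊗ₜ[R] c) + (b ⊗ₜ[R] 1) * D a c)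
    -- antisymmetry {{a,b}} = -{{b,a}}°
    (hanti : ∀ a b : A, D a b = - (TensorProduct.comm R A A) (D b a)) :
    ∀ a b c : A, sb D (a * b - b * a) c = 0 := by
  intro a b c
  have key : ∀ (x : A) (t : A ⊗[R] A),
      LinearMap.mul' R A ((TensorProduct.comm R A A) (t * (1 ⊗ₜ[R] x))) =
      LinearMap.mul' R A ((TensorProduct.comm R A A) ((x ⊗ₜ[R] 1) * t)) := by
    intro x t
    induction t using TensorProduct.induction_on with
    | zero => simp
    | tmul u v =>
        simp [Algebra.TensorProduct.tmul_mul_tmul, mul_assoc]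
    | add s t hs ht =>
        simp only [add_mul, mul_add, map_add, hs, ht]
  have h1 : D (a * b - b * a) c = D (a * b) c - D (b * a) c := by
    simp [map_sub]
  rw [sb, h1, hanti (a * b) c, hanti (b * a) c, hder c a b, hder c b a]
  simp only [map_add, map_neg, map_sub, neg_add, sub_eq_add_neg, neg_neg]
  have e1 := key b (D c a)
  have e2 := key a (D c b)
  abel_nf
  rw [e1, e2]
  abel

end Stmt1
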